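/- Let λ > √2 and let f : [0,1] ∖ {c} → [0,1] (0 < c < 1) be such that f is continuous and strictly increasing on [0,c) and on (c,1], with f(x) − f(y) ≥ λ(x − y) whenever x > y lie in the same branch, and with lim_{x→c⁻} f(x) = 1 and lim_{x→c⁺} f(x) = 0. Then for every nondegenerate interval J ⊆ [0,1] there exists n ≥ 0 such that c lies in the interior of f^n(J) or f^n(J) meets both components [0,c) and (c,1]. -/

import Mathlib

theorem lorenz_map_locally_eventually_crosses
    (c lam : ℝ) (hc0 : 0 < c) (hc1 : c < 1) (hlam : Real.sqrt 2 < lam)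
    (f : ℝ → ℝ)
    (hcontL : ContinuousOn f (Set.Ico 0 c))
    (hcontR : ContinuousOn f (Set.Ioc c 1))
    (hmonoL : StrictMonoOn f (Set.Ico 0 c))
    (hmonoR : StrictMonoOn f (Set.Ioc c 1))
    (hexpL : ∀ x ∈ Set.Ico 0 c, ∀ y ∈ Set.Ico 0 c, y ≤ x →
      lam * (x - y) ≤ f x - f y)
    (hexpR : ∀ x ∈ Set.Ioc c 1, ∀ y ∈ Set.Ioc c 1, y ≤ x →
      lam * (x - y) ≤ f x - f y)
    (hrange : ∀ x ∈ Set.Ico 0 c ∪ Set.Ioc c 1, f x ∈ Set.Icc 0 1)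
    (hlimL : Filter.Tendsto f (nhdsWithin c (Set.Iio c)) (nhds 1))
    (hlimR : Filter.Tendsto f (nhdsWithin c (Set.Ioi c)) (nhds 0)) :
    ∀ J : Set ℝ, J.OrdConnected → J ⊆ Set.Icc 0 1 → J.Nontrivial →
      ∃ n : ℕ, c ∈ interior (f^[n] '' J) ∨
        ((f^[n] '' J) ∩ Set.Ico 0 c).Nonempty ∧
        ((f^[n] '' J) ∩ Set.Ioc c 1).Nonempty := by
  intro J hJconn hJsub hJnt
  by_contra hcon
  push_neg at hcon
  have hlam1 : (1 : ℝ) < lam := by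
    have h1 : (1 : ℝ) < Real.sqrt 2 := by
      have h2 := Real.sqrt_lt_sqrt (by norm_num : (0:ℝ) ≤ 1) (by norm_num : (1:ℝ) < 2)
      simpa [Real.sqrt_one] using h2
    linarith
  obtain ⟨μ, hμ1, hμlam⟩ : ∃ μ : ℝ, 1 < μ ∧ μ < lam :=
    ⟨(1 + lam) / 2, by linarith, by linarith⟩
  have hμ0 : (0 : ℝ) < μ := by linarith
  -- whenever the n-th image meets both sides, contradiction
  have hboth : ∀ n p q, p ∈ f^[n] '' J → q ∈ f^[n] '' J →
      0 ≤ p → p < c → c < q → q ≤ 1 → False := by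
    intro n p q hp hq h0p hpc hcq hq1
    have h := (hcon n).2 ⟨p, hp, ⟨h0p, hpc⟩⟩
    have : q ∈ f^[n] '' J ∩ Set.Ioc c 1 := ⟨hq, ⟨hcq, hq1⟩⟩
    rw [h] at this
    exact this
  -- initial pair
  obtain ⟨a, ha, b, hb, hab⟩ := hJnt
  wlog hlt : a < b generalizing a b
  · exact this b hb a ha hab.symm (lt_of_le_of_ne (not_lt.mp hlt) hab.symm)
  obtain ⟨δ, hδ0, hδab⟩ : ∃ δ : ℝ, 0 < δ ∧ δ = (b - a) / 2 :=
    ⟨(b - a) / 2, by linarith, rfl⟩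
  have hmid : (a + b) / 2 ∈ J := hJconn.out ha hb ⟨by linarith, by linarith⟩
  -- key invariant
  have key : ∀ n : ℕ, ∃ S : Set ℝ, S ⊆ f^[n] '' J ∧ S.OrdConnected ∧
      (S ⊆ Set.Ico 0 c ∨ S ⊆ Set.Ioc c 1) ∧
      ∃ u v, u ∈ S ∧ v ∈ S ∧ μ ^ n * δ ≤ v - u := by
    intro n
    induction n with
    | zero =>
      have haJ : a ∈ f^[0] '' J := by simpa using ha
      have hbJ : b ∈ f^[0] '' J := by simpa using hb
      by_cases hcross : a < c ∧ c < b
      · exact (hboth 0 a b haJ hbJ (hJsub ha).1 hcross.1 hcross.2 (hJsub hb).2).elim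
      · rcases not_and_or.mp hcross with h | h
        · -- c ≤ a : pair on the right
          have hca : c ≤ a := not_lt.mp h
          refine ⟨J ∩ Set.Ioi c, ?_, hJconn.inter Set.ordConnected_Ioi, ?_,
            (a + b) / 2, b, ⟨hmid, by simp only [Set.mem_Ioi]; linarith⟩,
            ⟨hb, by simp only [Set.mem_Ioi]; linarith⟩, ?_⟩
          · intro x hx; simpa using hx.1
          · right
            rintro x ⟨hxJ, hxc⟩
            exact ⟨hxc, (hJsub hxJ).2⟩
          · simp only [pow_zero, one_mul]; rw [hδab]; linarith
        · -- b ≤ c : pair on the left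
          have hbc : b ≤ c := not_lt.mp h
          refine ⟨J ∩ Set.Iio c, ?_, hJconn.inter Set.ordConnected_Iio, ?_,
            a, (a + b) / 2, ⟨ha, by simp only [Set.mem_Iio]; linarith⟩,
            ⟨hmid, by simp only [Set.mem_Iio]; linarith⟩, ?_⟩
          · intro x hx; simpa using hx.1
          · left
            rintro x ⟨hxJ, hxc⟩
            exact ⟨(hJsub hxJ).1, hxc⟩
          · simp only [pow_zero, one_mul]; rw [hδab]; linarith
    | succ n ih =>
      obtain ⟨S, hSsub, hSconn, hSbranch, u, v, huS, hvS, huv⟩ := ih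
      have hμnδ : 0 < μ ^ n * δ := mul_pos (pow_pos hμ0 n) hδ0
      have hμn1δ : 0 < μ ^ (n + 1) * δ := mul_pos (pow_pos hμ0 (n + 1)) hδ0
      have huvlt : u < v := by linarith
      have hSrange : ∀ x ∈ S, f x ∈ Set.Icc 0 1 := by
        intro x hx
        rcases hSbranch with hB | hB
        · exact hrange x (Or.inl (hB hx))
        · exact hrange x (Or.inr (hB hx))
      have hcontS : ContinuousOn f S := by
        rcases hSbranch with hB | hB
        · exact hcontL.mono hB
        · exact hcontR.mono hB
      have himgconn : (f '' S).OrdConnected :=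
        (hSconn.isPreconnected.image f hcontS).ordConnected
      have himgsub : f '' S ⊆ f^[n + 1] '' J := by
        rw [Function.iterate_succ', Set.image_comp]
        exact Set.image_mono hSsub
      have hexp : lam * (v - u) ≤ f v - f u := by
        rcases hSbranch with hB | hB
        · exact hexpL v (hB hvS) u (hB huS) huvlt.le
        · exact hexpR v (hB hvS) u (hB huS) huvlt.le
      -- strict gap:  μ^(n+1) δ < f v - f u
      have hgap : μ ^ (n + 1) * δ < f v - f u := by
        have h1 : μ ^ (n + 1) * δ = μ * (μ ^ n * δ) := by ring
        have h2 : μ * (μ ^ n * δ) ≤ μ * (v - u) := by nlinarith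
        have h3 : μ * (v - u) < lam * (v - u) := by nlinarith
        linarith
      have hfufv : f u < f v := by nlinarith
      have hfuS : f u ∈ f '' S := ⟨u, huS, rfl⟩
      have hfvS : f v ∈ f '' S := ⟨v, hvS, rfl⟩
      have hfu01 : f u ∈ Set.Icc (0:ℝ) 1 := hSrange u huS
      have hfv01 : f v ∈ Set.Icc (0:ℝ) 1 := hSrange v hvS
      by_cases hstraddle : (∃ p ∈ f '' S, p < c) ∧ (∃ q ∈ f '' S, c < q)
      · obtain ⟨⟨p, hpS, hpc⟩, ⟨q, hqS, hcq⟩⟩ := hstraddle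
        obtain ⟨x, hxS, hxp⟩ := hpS
        obtain ⟨y, hyS, hyq⟩ := hqS
        exact (hboth (n + 1) p q (himgsub ⟨x, hxS, hxp⟩) (himgsub ⟨y, hyS, hyq⟩)
          (hxp ▸ (hSrange x hxS).1) hpc hcq (hyq ▸ (hSrange y hyS).2)).elim
      · rcases not_and_or.mp hstraddle with h | h
        · -- all points of f '' S are ≥ c : trim at c from below
          push_neg at h
          have hcfu : c ≤ f u := h _ hfuS
          have hu'mem : f v - μ ^ (n + 1) * δ ∈ f '' S :=
            himgconn.out hfuS hfvS ⟨by linarith, by linarith⟩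
          refine ⟨(f '' S) ∩ Set.Ioi c, ?_, himgconn.inter Set.ordConnected_Ioi,
            ?_, f v - μ ^ (n + 1) * δ, f v,
            ⟨hu'mem, by simp only [Set.mem_Ioi]; linarith⟩,
            ⟨hfvS, by simp only [Set.mem_Ioi]; linarith⟩, by linarith⟩
          · exact Set.Subset.trans Set.inter_subset_left himgsub
          · right
            rintro x ⟨hxI, hxc⟩
            obtain ⟨y, hyS, hyx⟩ := hxI
            exact ⟨hxc, hyx ▸ (hSrange y hyS).2⟩
        · -- all points of f '' S are ≤ c : trim at c from above
          push_neg at h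
          have hfvc : f v ≤ c := h _ hfvS
          have hv'mem : f u + μ ^ (n + 1) * δ ∈ f '' S :=
            himgconn.out hfuS hfvS ⟨by linarith, by linarith⟩
          refine ⟨(f '' S) ∩ Set.Iio c, ?_, himgconn.inter Set.ordConnected_Iio,
            ?_, f u, f u + μ ^ (n + 1) * δ,
            ⟨hfuS, by simp only [Set.mem_Iio]; linarith⟩,
            ⟨hv'mem, by simp only [Set.mem_Iio]; linarith⟩, by linarith⟩
          · exact Set.Subset.trans Set.inter_subset_left himgsub
          · left
            rintro x ⟨hxI, hxc⟩
            obtain ⟨y, hyS, hyx⟩ := hxI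
            exact ⟨hyx ▸ (hSrange y hyS).1, hxc⟩
  -- final contradiction: lengths blow up but stay ≤ 1
  obtain ⟨N, hN⟩ := pow_unbounded_of_one_lt (1 / δ) hμ1
  obtain ⟨S, hSsub, hSconn, hSbranch, u, v, huS, hvS, huv⟩ := key N
  have hu01 : u ∈ Set.Icc (0:ℝ) 1 := by
    rcases hSbranch with hB | hB
    · exact ⟨(hB huS).1, le_of_lt (lt_trans (hB huS).2 hc1)⟩
    · exact ⟨le_of_lt (lt_of_le_of_lt hc0.le (hB huS).1), (hB huS).2⟩
  have hv01 : v ∈ Set.Icc (0:ℝ) 1 := by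
    rcases hSbranch with hB | hB
    · exact ⟨(hB hvS).1, le_of_lt (lt_trans (hB hvS).2 hc1)⟩
    · exact ⟨le_of_lt (lt_of_le_of_lt hc0.le (hB hvS).1), (hB hvS).2⟩
  have h1 : 1 < μ ^ N * δ := by
    rw [div_lt_iff₀ hδ0] at hN
    linarith
  linarith [hu01.1, hv01.2]
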